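/- arXiv:1301.1811 — 2 statements merged into one kernel-verified Lean document; each statement's English description precedes it below -/
import Mathlib

section
/- Let H ⊂ ℝ^N be an open affine half-space with reflection Q at ∂H and let ρ > 0. Then there exist constants c̃₁ = c̃₁(N,s,ρ) > 0 and c̃₂ = c̃₂(N,s,ρ) > 0 such that the following holds: if x₀ ∈ H satisfies dist(x₀,∂H) ≥ 2ρ and v ∈ H^s(ℝ^N) ∩ L^∞(ℝ^N) is a continuous antisymmetric function with v ≥ 0 on B_{2ρ}(x₀), then its L_s-harmonic extension w satisfies w(x,y)/y^{2s} ≥ c̃₁ (∫_{B_ρ(x₀)} v(z)^{1/2} dz)² − c̃₂ ‖v⁻‖_{L^∞(H∖B_{2ρ}(x₀))} for all (x,y) ∈ B_ρ(x₀)×(0,1]. -/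
open MeasureTheory Real Set Filter Topology Metric
open scoped NNReal ENNReal

noncomputable section

/-- Euclidean space `ℝ^N`. -/
abbrev Euc (N : ℕ) := EuclideanSpace ℝ (Fin N)

/-- View a point of `ℝ^N` as a tuple of coordinates. -/
def toFun {N : ℕ} (x : Euc N) : Fin N → ℝ := x

/-- View a tuple of coordinates as a point of `ℝ^N`. -/
def ofFun {N : ℕ} (x : Fin N → ℝ) : Euc N := WithLp.toLp 2 x

/-- The normalization constant `c_{N,s}`. -/
def cNs (N : ℕ) (s : ℝ) : ℝ :=
  s * (1 - s) * Real.pi ^ (-(N : ℝ) / 2) * (4 : ℝ) ^ s *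
    Real.Gamma ((N : ℝ) / 2 + s) / Real.Gamma (2 - s)

/-- The fractional quadratic form `E(u,v)`. -/
def fracForm (N : ℕ) (s : ℝ) (u v : Euc N → ℝ) : ℝ :=
  (cNs N s / 2) *
    ∫ x : Euc N, ∫ y : Euc N, (u x - u y) * (v x - v y) * ‖x - y‖ ^ (-(N : ℝ) - 2 * s)

/-- Gagliardo-type seminorm (as an extended nonnegative number) over a set `U`. -/
def gagliardo (N : ℕ) (s : ℝ) (U : Set (Euc N)) (u : Euc N → ℝ) : ℝ≥0∞ :=
  ∫⁻ x in U, ∫⁻ y in U, ENNReal.ofReal ((u x - u y) ^ 2 * ‖x - y‖ ^ (-(N : ℝ) - 2 * s))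

/-- Membership in `H^s(ℝ^N)`. -/
def MemHs (N : ℕ) (s : ℝ) (u : Euc N → ℝ) : Prop :=
  MemLp u 2 (volume : Measure (Euc N)) ∧ gagliardo N s Set.univ u < ⊤

/-- Membership in `ℋ^s_0(U)`. -/
def MemHs0 (N : ℕ) (s : ℝ) (U : Set (Euc N)) (u : Euc N → ℝ) : Prop :=
  MemHs N s u ∧ ∀ᵐ x ∂(volume : Measure (Euc N)), x ∉ U → u x = 0

/-- Membership in `𝒱^s(U')`. -/
def MemVs (N : ℕ) (s : ℝ) (U' : Set (Euc N)) (u : Euc N → ℝ) : Prop :=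
  MemLp u ⊤ (volume : Measure (Euc N)) ∧ gagliardo N s U' u < ⊤

/-- Membership in `C_0(Ω)`. -/
def MemC0 (N : ℕ) (Ω : Set (Euc N)) (u : Euc N → ℝ) : Prop :=
  Continuous u ∧ ∀ x ∉ Ω, u x = 0

/-- Supremum of a real valued function over a set. -/
def supOn {X : Type*} (A : Set X) (f : X → ℝ) : ℝ := sSup (f '' A)

/-- Supremum of a space-time function over a product set. -/
def supOn2 {N : ℕ} (T : Set ℝ) (A : Set (Euc N)) (w : ℝ → Euc N → ℝ) : ℝ :=
  sSup ((fun p : ℝ × Euc N => w p.1 p.2) '' (T ×ˢ A))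

/-- The mean `[w]_{L¹(T×A)}` of a space-time function over a product set. -/
def meanOn2 {N : ℕ} (T : Set ℝ) (A : Set (Euc N)) (w : ℝ → Euc N → ℝ) : ℝ :=
  ((((volume : Measure ℝ).prod (volume : Measure (Euc N))) (T ×ˢ A)).toReal)⁻¹ *
    ∫ p : ℝ × Euc N in T ×ˢ A,
      w p.1 p.2 ∂((volume : Measure ℝ).prod (volume : Measure (Euc N)))

/-- Negative part of a function. -/
def negp {X : Type*} (f : X → ℝ) : X → ℝ := fun x => max (-(f x)) 0

/-- Positive part of a function. -/
def posp {X : Type*} (f : X → ℝ) : X → ℝ := fun x => max (f x) 0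

/-- The open affine half-space `{x : ⟪a,x⟫ > b}`. -/
def halfSpace {N : ℕ} (a : Euc N) (b : ℝ) : Set (Euc N) := {x | b < (inner ℝ a x : ℝ)}

/-- Reflection at the hyperplane `{x : ⟪a,x⟫ = b}`. -/
def reflAt {N : ℕ} (a : Euc N) (b : ℝ) (x : Euc N) : Euc N :=
  x - ((2 * ((inner ℝ a x : ℝ) - b)) / ‖a‖ ^ 2) • a

/-- A function is antisymmetric w.r.t. the reflection at `{⟪a,x⟫ = b}`. -/
def Antisym {N : ℕ} (a : Euc N) (b : ℝ) (w : Euc N → ℝ) : Prop :=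
  ∀ x, w (reflAt a b x) = - w x

/-- `v` (with time derivative `vt`) is a supersolution of
`∂_t v + (-Δ)^s v = c v + g` on `T × U`. -/
def IsSupersolution (N : ℕ) (s : ℝ) (T : Set ℝ) (U : Set (Euc N))
    (c g : ℝ → Euc N → ℝ) (v vt : ℝ → Euc N → ℝ) : Prop :=
  (∃ U' : Set (Euc N), IsOpen U' ∧ closure U ⊆ U' ∧ ∀ t ∈ T, MemVs N s U' (v t)) ∧
  (∀ t ∈ T, ∀ x ∈ U, HasDerivWithinAt (fun τ => v τ x) (vt t x) T t) ∧
  (∀ φ : Euc N → ℝ, MemHs0 N s U φ → (∀ x, 0 ≤ φ x) →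
    ∀ᵐ t ∂(volume : Measure ℝ), t ∈ T →
      fracForm N s (v t) φ ≥ ∫ x in U, (c t x * v t x + g t x - vt t x) * φ x)

/-- Antisymmetric supersolution of `∂_t v + (-Δ)^s v = c v` on `T × U`, `U ⊆ H`. -/
def IsAntisymSupersol (N : ℕ) (s : ℝ) (a : Euc N) (b : ℝ) (T : Set ℝ)
    (U : Set (Euc N)) (c : ℝ → Euc N → ℝ) (v vt : ℝ → Euc N → ℝ) : Prop :=
  IsSupersolution N s T U c (fun _ _ => 0) v vt ∧ U ⊆ halfSpace a b ∧
  ∀ t ∈ T, Antisym a b (v t)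

/-- Entire antisymmetric supersolution: in addition `v ≥ 0` on `T × (H \ U)`. -/
def IsEntireAntisymSupersol (N : ℕ) (s : ℝ) (a : Euc N) (b : ℝ) (T : Set ℝ)
    (U : Set (Euc N)) (c : ℝ → Euc N → ℝ) (v vt : ℝ → Euc N → ℝ) : Prop :=
  IsAntisymSupersol N s a b T U c v vt ∧
  ∀ t ∈ T, ∀ x ∈ halfSpace a b \ U, 0 ≤ v t x

/-- Entire supersolution: a supersolution with `v ≥ 0` on `T × (ℝ^N \ U)`. -/
def IsEntireSupersol (N : ℕ) (s : ℝ) (T : Set ℝ) (U : Set (Euc N))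
    (c : ℝ → Euc N → ℝ) (v vt : ℝ → Euc N → ℝ) : Prop :=
  IsSupersolution N s T U c (fun _ _ => 0) v vt ∧ ∀ t ∈ T, ∀ x ∉ U, 0 ≤ v t x

/-- The quadratic form associated with a symmetric kernel `k`. -/
def kernForm (N : ℕ) (k : Euc N → Euc N → ℝ) (u v : Euc N → ℝ) : ℝ :=
  (1 / 2) * ∫ x : Euc N, ∫ y : Euc N, (u x - u y) * (v x - v y) * k x y

/-- Condition (K) on a kernel. -/
def KernelCond (N : ℕ) (s : ℝ) (r₀ C₁ C₂ : ℝ) (k : Euc N → Euc N → ℝ) : Prop :=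
  (∀ x y : Euc N, 0 ≤ k x y) ∧
  (∀ x y : Euc N, x ≠ y → k x y = k y x) ∧
  (∀ x y : Euc N, x ≠ y → k x y ≤ C₁ * ‖x - y‖ ^ (-(N : ℝ) - 2 * s)) ∧
  (∀ x y : Euc N, x ≠ y → ‖x - y‖ ≤ r₀ → C₂ * ‖x - y‖ ^ (-(N : ℝ) - 2 * s) ≤ k x y)

/-- `v` (with time derivative `vt`) is a supersolution of
`∂_t v - P.V.∫ (v(t,y)-v(t,x))k(x,y)dy = g` on `T × U`. -/
def IsKernelSupersol (N : ℕ) (s : ℝ) (k : Euc N → Euc N → ℝ) (T : Set ℝ)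
    (U : Set (Euc N)) (g : ℝ → Euc N → ℝ) (v vt : ℝ → Euc N → ℝ) : Prop :=
  (∃ U' : Set (Euc N), IsOpen U' ∧ closure U ⊆ U' ∧ ∀ t ∈ T, MemVs N s U' (v t)) ∧
  (∀ t ∈ T, ∀ x ∈ U, HasDerivWithinAt (fun τ => v τ x) (vt t x) T t) ∧
  (∀ φ : Euc N → ℝ, MemHs0 N s U φ → (∀ x, 0 ≤ φ x) →
    ∀ᵐ t ∂(volume : Measure ℝ), t ∈ T →
      kernForm N k (v t) φ ≥ ∫ x in U, (g t x - vt t x) * φ x)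

/-- A (global, weak) solution of problem (P), with prescribed time derivative `ut`. -/
def IsSolutionP (N : ℕ) (s : ℝ) (Ω : Set (Euc N)) (B : Set ℝ)
    (f : ℝ → Euc N → ℝ → ℝ) (u ut : ℝ → Euc N → ℝ) : Prop :=
  (∀ t : ℝ, 0 < t → MemHs0 N s Ω (u t) ∧ MemC0 N Ω (u t)) ∧
  (∀ t : ℝ, 0 < t → ∀ x ∈ Ω, u t x ∈ B) ∧
  ContinuousOn (fun p : ℝ × Euc N => u p.1 p.2) (Set.Ioi 0 ×ˢ (Set.univ : Set (Euc N))) ∧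
  (∀ t : ℝ, 0 < t → ∀ x ∈ Ω, HasDerivAt (fun τ => u τ x) (ut t x) t) ∧
  (∀ t : ℝ, 0 < t → ∀ φ : Euc N → ℝ, MemHs0 N s Ω φ →
    fracForm N s (u t) φ = ∫ x in Ω, (f t x (u t x) - ut t x) * φ x)

/-- The ω-limit set of `u` with respect to the `L^∞` norm. -/
def omegaSet (N : ℕ) (Ω : Set (Euc N)) (u : ℝ → Euc N → ℝ) (z : Euc N → ℝ) : Prop :=
  MemC0 N Ω z ∧ ∃ tk : ℕ → ℝ, Tendsto tk atTop atTop ∧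
    TendstoUniformly (fun k x => u (tk k) x) z atTop

/-- Multiply the first coordinate by `σ`. -/
def flipFirst {N : ℕ} [NeZero N] (σ : ℝ) (x : Euc N) : Euc N :=
  ofFun (Function.update (toFun x) 0 (σ * toFun x 0))

/-- `Ω` has a Lipschitz boundary: near any boundary point, after an isometry of `ℝ^N`,
`Ω` is the region above the graph of a Lipschitz function. -/
def HasLipschitzBoundary (N : ℕ) (Ω : Set (Euc N)) : Prop :=
  ∀ x ∈ frontier Ω, ∃ (r : ℝ) (φ : Euc N ≃ᵢ Euc N) (g : Euc N → ℝ) (K : ℝ≥0) (i : Fin N),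
    0 < r ∧ LipschitzWith K g ∧
    (∀ y y' : Euc N, (∀ j : Fin N, j ≠ i → toFun y j = toFun y' j) → g y = g y') ∧
    ∀ y ∈ Metric.ball x r, (y ∈ Ω ↔ g (φ y) < toFun (φ y) i)

/-- Condition (D1). -/
def CondD1 (N : ℕ) [NeZero N] (Ω : Set (Euc N)) : Prop :=
  IsOpen Ω ∧ IsConnected Ω ∧ Bornology.IsBounded Ω ∧ HasLipschitzBoundary N Ω ∧
  ∀ x ∈ Ω, ∀ σ ∈ Set.Icc (-1 : ℝ) 1, flipFirst σ x ∈ Ω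

/-- A set has at most finitely many connected components. -/
def FinitelyManyComponents {X : Type*} [TopologicalSpace X] (A : Set X) : Prop :=
  {C : Set X | ∃ x ∈ A, C = connectedComponentIn A x}.Finite

/-- Condition (D2). -/
def CondD2 (N : ℕ) [NeZero N] (Ω : Set (Euc N)) : Prop :=
  ∀ lam : ℝ, 0 < lam → FinitelyManyComponents {x ∈ Ω | lam < toFun x 0}

/-- Condition (F1). -/
def CondF1 (N : ℕ) (Ω : Set (Euc N)) (B : Set ℝ) (f : ℝ → Euc N → ℝ → ℝ) : Prop :=
  ContinuousOn (fun p : ℝ × Euc N × ℝ => f p.1 p.2.1 p.2.2)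
    (Set.Ioi 0 ×ˢ Ω ×ˢ B) ∧
  ∀ K : Set ℝ, K ⊆ B → Bornology.IsBounded K → ∃ L : ℝ, 0 < L ∧
    ∀ t : ℝ, 0 < t → ∀ x ∈ Ω, ∀ p ∈ K, ∀ q ∈ K, |f t x p - f t x q| ≤ L * |p - q|

/-- Condition (F2). -/
def CondF2 (N : ℕ) [NeZero N] (Ω : Set (Euc N)) (B : Set ℝ) (f : ℝ → Euc N → ℝ → ℝ) : Prop :=
  ∀ t : ℝ, 0 < t → ∀ p ∈ B, ∀ x ∈ Ω, ∀ σ ∈ Set.Icc (-1 : ℝ) 1,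
    f t x p ≤ f t (flipFirst σ x) p

/-- Condition (U1): global uniform bound. -/
def CondU1 (N : ℕ) (u : ℝ → Euc N → ℝ) : Prop :=
  ∃ cu : ℝ, 0 < cu ∧ ∀ t : ℝ, 0 < t → ∀ x, |u t x| ≤ cu

/-- Condition (U2): uniform equicontinuity of `u(τ+·,·)`, `τ ≥ 1`, on `[0,1] × Ω̄`. -/
def CondU2 (N : ℕ) (Ω : Set (Euc N)) (u : ℝ → Euc N → ℝ) : Prop :=
  ∀ ε : ℝ, 0 < ε → ∃ δ : ℝ, 0 < δ ∧ ∀ τ : ℝ, 1 ≤ τ →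
    ∀ t ∈ Set.Icc τ (τ + 1), ∀ t' ∈ Set.Icc τ (τ + 1),
    ∀ x ∈ closure Ω, ∀ x' ∈ closure Ω,
      |t - t'| < δ → dist x x' < δ → |u t x - u t' x'| < ε

/-- The half-space `H_λ = {x₁ > λ}`. -/
def Hlam (N : ℕ) [NeZero N] (lam : ℝ) : Set (Euc N) := {x | lam < toFun x 0}

/-- Reflection `Q_λ` at the hyperplane `{x₁ = λ}`. -/
def Qlam (N : ℕ) [NeZero N] (lam : ℝ) (x : Euc N) : Euc N :=
  ofFun (Function.update (toFun x) 0 (2 * lam - toFun x 0))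

/-- `V_λ z = z ∘ Q_λ - z`. -/
def Vlam (N : ℕ) [NeZero N] (lam : ℝ) (z : Euc N → ℝ) : Euc N → ℝ :=
  fun x => z (Qlam N lam x) - z x

/-- Statement `(S_λ)`. -/
def Slam (N : ℕ) [NeZero N] (lam : ℝ) (u : ℝ → Euc N → ℝ) : Prop :=
  Tendsto (fun t => supOn (Hlam N lam) (negp (Vlam N lam (u t)))) atTop (nhds 0)

/-- `l = max {x₁ : x ∈ Ω}`. -/
def lmax (N : ℕ) [NeZero N] (Ω : Set (Euc N)) : ℝ :=
  sSup ((fun x : Euc N => toFun x 0) '' Ω)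

/-- The standing assumptions of Section 3 of the paper: (D1), (F1), (F2), `u` a
nonnegative global solution of (P) satisfying (U1) and (U2), `ℬ` an open interval. -/
def Standing (N : ℕ) [NeZero N] (s : ℝ) (Ω : Set (Euc N)) (B : Set ℝ)
    (f : ℝ → Euc N → ℝ → ℝ) (u ut : ℝ → Euc N → ℝ) : Prop :=
  IsOpen B ∧ B.OrdConnected ∧
  CondD1 N Ω ∧ CondF1 N Ω B f ∧ CondF2 N Ω B f ∧
  IsSolutionP N s Ω B f u ut ∧ (∀ t : ℝ, 0 < t → ∀ x, 0 ≤ u t x) ∧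
  CondU1 N u ∧ CondU2 N Ω u

/-- The normalizing constant `p_{N,s}` of the Caffarelli–Silvestre Poisson kernel. -/
def pNs (N : ℕ) (s : ℝ) : ℝ :=
  (∫ x : Euc N, (‖x‖ ^ 2 + 1) ^ (-((N : ℝ) + 2 * s) / 2))⁻¹

/-- The Caffarelli–Silvestre (`L_s`-harmonic) extension of `v` to the upper half-space. -/
def csExtension (N : ℕ) (s : ℝ) (v : Euc N → ℝ) (x : Euc N) (y : ℝ) : ℝ :=
  ∫ z : Euc N, v z *
    (pNs N s * y ^ (2 * s) * (‖x - z‖ ^ 2 + y ^ 2) ^ (-((N : ℝ) + 2 * s) / 2))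

/-- The constant `d_s = 2^{1-2s} Γ(1-s)/Γ(s)`. -/
def dCS (s : ℝ) : ℝ := (2 : ℝ) ^ (1 - 2 * s) * Real.Gamma (1 - s) / Real.Gamma s

/-- The Laplacian as the trace of the second derivative. -/
def lap (N : ℕ) (Ψ : Euc N → ℝ) (x : Euc N) : ℝ :=
  ∑ i : Fin N, iteratedFDeriv ℝ 2 Ψ x ![EuclideanSpace.single i 1, EuclideanSpace.single i 1]

/-- `Ψ` is the positive first Dirichlet eigenfunction on `B_ρ(0)` with eigenvalue `lam₁`,
normalized by `‖Ψ‖_∞ = 1`. -/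
def IsFirstEigen (N : ℕ) (ρ lam₁ : ℝ) (Ψ : Euc N → ℝ) : Prop :=
  0 < lam₁ ∧
  ContinuousOn Ψ (Metric.closedBall (0 : Euc N) ρ) ∧
  (∀ x ∈ Metric.ball (0 : Euc N) ρ, ContDiffAt ℝ 2 Ψ x) ∧
  (∀ x ∈ Metric.ball (0 : Euc N) ρ, 0 < Ψ x) ∧
  (∀ x ∈ Metric.sphere (0 : Euc N) ρ, Ψ x = 0) ∧
  (∀ x ∈ Metric.ball (0 : Euc N) ρ, -lap N Ψ x = lam₁ * Ψ x) ∧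
  sSup (Ψ '' Metric.closedBall (0 : Euc N) ρ) = 1

/-- `inrad D > ρ`: some `r > ρ` is such that every connected component of `D`
contains a ball of radius `r` centered in `D`. -/
def InradGT {N : ℕ} (D : Set (Euc N)) (ρ : ℝ) : Prop :=
  ∃ r : ℝ, ρ < r ∧ ∀ x ∈ D, ∃ x₀ ∈ D, Metric.ball x₀ r ⊆ connectedComponentIn D x

/-- The antisymmetrized kernel `J(x,y)`. -/
def Jker (N : ℕ) (s : ℝ) (a : Euc N) (b : ℝ) (x y : Euc N) : ℝ :=
  cNs N s * (‖x - y‖ ^ (-(N : ℝ) - 2 * s) - ‖x - reflAt a b y‖ ^ (-(N : ℝ) - 2 * s))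

/-- `κ_H(x) = ∫_{ℝ^N ∖ H} c_{N,s} |x-y|^{-N-2s} dy`. -/
def kappaH (N : ℕ) (s : ℝ) (a : Euc N) (b : ℝ) (x : Euc N) : ℝ :=
  ∫ y in (halfSpace a b)ᶜ, cNs N s * ‖x - y‖ ^ (-(N : ℝ) - 2 * s)

end
noncomputable section CSHelpers

namespace CSLB

/-- Difference of rpow with fixed gap is antitone. -/
lemma rpow_sub_rpow_le {e c t T : ℝ} (he : e < 0) (hc : 0 ≤ c) (ht : 0 < t) (htT : t ≤ T) :
    T ^ e - (T + c) ^ e ≤ t ^ e - (t + c) ^ e := by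
  have key : AntitoneOn (fun u : ℝ => u ^ e - (u + c) ^ e) (Set.Icc t T) := by
    apply antitoneOn_of_deriv_nonpos (convex_Icc t T)
    · apply ContinuousOn.sub
      · exact ContinuousOn.rpow_const continuousOn_id
          (fun u hu => Or.inl (ne_of_gt (lt_of_lt_of_le ht hu.1)))
      · exact ContinuousOn.rpow_const (continuousOn_id.add continuousOn_const)
          (fun u hu => Or.inl (show (u:ℝ) + c ≠ 0 by have := hu.1; nlinarith))
    · intro u hu
      rw [interior_Icc] at hu
      have hu0 : 0 < u := lt_trans ht hu.1
      have d1 : HasDerivAt (fun w : ℝ => w ^ e) (e * u ^ (e - 1)) u :=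
        Real.hasDerivAt_rpow_const (Or.inl hu0.ne')
      have d2 : HasDerivAt (fun w : ℝ => (w + c) ^ e) (e * (u + c) ^ (e - 1) * 1) u := by
        have h0 : (0:ℝ) < u + c := by positivity
        exact (Real.hasDerivAt_rpow_const (x := u + c) (p := e) (Or.inl h0.ne')).comp u
          ((hasDerivAt_id u).add_const c)
      exact ((d1.sub d2).differentiableAt).differentiableWithinAt
    · intro u hu
      rw [interior_Icc] at hu
      have hu0 : 0 < u := lt_trans ht hu.1
      have d1 : HasDerivAt (fun w : ℝ => w ^ e) (e * u ^ (e - 1)) u :=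
        Real.hasDerivAt_rpow_const (Or.inl hu0.ne')
      have d2 : HasDerivAt (fun w : ℝ => (w + c) ^ e) (e * (u + c) ^ (e - 1) * 1) u := by
        have h0 : (0:ℝ) < u + c := by positivity
        exact (Real.hasDerivAt_rpow_const (x := u + c) (p := e) (Or.inl h0.ne')).comp u
          ((hasDerivAt_id u).add_const c)
      rw [show deriv (fun u : ℝ => u ^ e - (u + c) ^ e) u = e * u ^ (e - 1) - e * (u + c) ^ (e - 1) * 1 from (d1.sub d2).deriv]
      have hle : (u + c) ^ (e - 1) ≤ u ^ (e - 1) :=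
        Real.rpow_le_rpow_of_nonpos hu0 (le_add_of_nonneg_right hc) (by linarith)
      nlinarith
  exact key ⟨le_refl t, htT⟩ ⟨htT, le_refl T⟩ htT

/-- A continuous function in `L^∞` is (everywhere) bounded. -/
lemma exists_global_bound {N : ℕ} {v : Euc N → ℝ} (hc : Continuous v)
    (hb : MeasureTheory.MemLp v ⊤ (volume : Measure (Euc N))) :
    ∃ M : ℝ, 0 ≤ M ∧ ∀ x, |v x| ≤ M := by
  set C := (eLpNorm v ⊤ (volume : Measure (Euc N))).toReal with hC
  refine ⟨C, ENNReal.toReal_nonneg, ?_⟩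
  by_contra h
  push_neg at h
  obtain ⟨x₁, hx₁⟩ := h
  have hU : IsOpen {z : Euc N | C < |v z|} :=
    isOpen_lt continuous_const (continuous_abs.comp hc)
  have hpos : 0 < volume {z : Euc N | C < |v z|} := hU.measure_pos volume ⟨x₁, hx₁⟩
  have htop : eLpNorm v ⊤ (volume : Measure (Euc N)) ≠ ⊤ := hb.2.ne
  have hae : ∀ᵐ z ∂(volume : Measure (Euc N)), ¬ (C < |v z|) := by
    have h1 : ∀ᵐ z ∂(volume : Measure (Euc N)),
        (‖v z‖₊ : ℝ≥0∞) ≤ eLpNormEssSup v volume := ae_le_eLpNormEssSup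
    filter_upwards [h1] with z hz
    have h2 : ((‖v z‖₊ : ℝ≥0∞)).toReal ≤ (eLpNormEssSup v (volume : Measure (Euc N))).toReal := by
      apply ENNReal.toReal_mono _ hz
      rwa [← eLpNorm_exponent_top]
    rw [not_lt, hC, eLpNorm_exponent_top]
    simpa [Real.norm_eq_abs] using h2
  rw [ae_iff] at hae
  simp only [not_not] at hae
  exact absurd hae hpos.ne'

/-- The basic kernel integrability. -/
lemma integrable_base {N : ℕ} {r : ℝ} (hr : (N : ℝ) < r) {y : ℝ} (hy : 0 < y) :
    MeasureTheory.Integrable (fun z : Euc N => (‖z‖ ^ 2 + y ^ 2) ^ (-r / 2))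
      (volume : Measure (Euc N)) := by
  have hfr : ((Module.finrank ℝ (Euc N) : ℝ)) < r := by
    simpa [finrank_euclideanSpace_fin] using hr
  have hint := integrable_rpow_neg_one_add_norm_sq (E := Euc N)
    (μ := volume) hfr
  set m : ℝ := min (y ^ 2) 1 with hm
  have hm0 : 0 < m := lt_min (by positivity) one_pos
  have hr0 : 0 < r := lt_of_le_of_lt (Nat.cast_nonneg N) hr
  refine (hint.const_mul (m ^ (-r / 2))).mono'
    (Continuous.aestronglyMeasurable ?_) (Filter.Eventually.of_forall fun z => ?_)
  · exact Continuous.rpow_const (by fun_prop) (fun z => Or.inl (by positivity))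
  · have h1 : m * (1 + ‖z‖ ^ 2) ≤ ‖z‖ ^ 2 + y ^ 2 := by
      have h3 : m ≤ y ^ 2 := min_le_left _ _
      have h4 : m ≤ 1 := min_le_right _ _
      nlinarith [norm_nonneg z, sq_nonneg (‖z‖)]
    have hb0 : (0:ℝ) < m * (1 + ‖z‖ ^ 2) := by positivity
    have h2 : (‖z‖ ^ 2 + y ^ 2) ^ (-r / 2) ≤ (m * (1 + ‖z‖ ^ 2)) ^ (-r / 2) :=
      Real.rpow_le_rpow_of_nonpos hb0 h1 (by linarith)
    rw [Real.norm_eq_abs, abs_of_nonneg (Real.rpow_nonneg (by positivity) _)]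
    calc (‖z‖ ^ 2 + y ^ 2) ^ (-r / 2) ≤ (m * (1 + ‖z‖ ^ 2)) ^ (-r / 2) := h2
      _ = m ^ (-r / 2) * (1 + ‖z‖ ^ 2) ^ (-r / 2) :=
          Real.mul_rpow hm0.le (by positivity)

lemma integrable_shift {N : ℕ} {r : ℝ} (hr : (N : ℝ) < r) (x : Euc N) {y : ℝ} (hy : 0 < y) :
    MeasureTheory.Integrable (fun z : Euc N => (‖x - z‖ ^ 2 + y ^ 2) ^ (-r / 2))
      (volume : Measure (Euc N)) :=
  (integrable_base hr hy).comp_sub_left x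

end CSLB

end CSHelpers
noncomputable section CSHelpers2
namespace CSLB

variable {N : ℕ}

lemma inner_reflAt {a : Euc N} (ha : a ≠ 0) (b : ℝ) (x : Euc N) :
    (inner ℝ a (reflAt a b x) : ℝ) = 2 * b - inner ℝ a x := by
  have hna : (‖a‖:ℝ) ^ 2 ≠ 0 := pow_ne_zero 2 (norm_ne_zero_iff.2 ha)
  simp only [reflAt, inner_sub_right, real_inner_smul_right, real_inner_self_eq_norm_sq]
  field_simp
  ring

lemma reflAt_involutive {a : Euc N} (ha : a ≠ 0) {b : ℝ} :
    Function.Involutive (reflAt a b) := by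
  intro x
  have h := inner_reflAt ha b x
  show reflAt a b (reflAt a b x) = x
  rw [show reflAt a b (reflAt a b x)
      = reflAt a b x - ((2 * ((inner ℝ a (reflAt a b x) : ℝ) - b)) / ‖a‖ ^ 2) • a from rfl, h]
  rw [show (2 * ((2 * b - (inner ℝ a x : ℝ)) - b)) / ‖a‖ ^ 2
      = -((2 * ((inner ℝ a x : ℝ) - b)) / ‖a‖ ^ 2) by ring]
  rw [neg_smul, sub_neg_eq_add]
  rw [show reflAt a b x = x - ((2 * ((inner ℝ a x : ℝ) - b)) / ‖a‖ ^ 2) • a from rfl]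
  abel

lemma norm_sub_reflAt {a : Euc N} (ha : a ≠ 0) (b : ℝ) (x z : Euc N) :
    ‖x - reflAt a b z‖ ^ 2
      = ‖x - z‖ ^ 2 + 4 * (((inner ℝ a x : ℝ) - b) * ((inner ℝ a z : ℝ) - b)) / ‖a‖ ^ 2 := by
  have hna : (‖a‖:ℝ) ^ 2 ≠ 0 := pow_ne_zero 2 (norm_ne_zero_iff.2 ha)
  have h1 : x - reflAt a b z = (x - z) + ((2 * ((inner ℝ a z : ℝ) - b)) / ‖a‖ ^ 2) • a := by
    simp only [reflAt]
    abel
  rw [h1, norm_add_sq_real, real_inner_smul_right, inner_sub_left, norm_smul, mul_pow,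
    Real.norm_eq_abs, sq_abs, real_inner_comm x a, real_inner_comm z a]
  field_simp
  ring

/-- The reflection at a linear hyperplane as a linear isometry equivalence. -/
def reflLIE (a : Euc N) (ha : a ≠ 0) : Euc N ≃ₗᵢ[ℝ] Euc N where
  toLinearEquiv :=
    { toFun := reflAt a 0
      map_add' := by
        intro p q
        simp only [reflAt, inner_add_right, sub_zero]
        rw [show (2 * ((inner ℝ a p : ℝ) + (inner ℝ a q : ℝ))) / ‖a‖ ^ 2
            = (2 * (inner ℝ a p : ℝ)) / ‖a‖ ^ 2 + (2 * (inner ℝ a q : ℝ)) / ‖a‖ ^ 2 by ring,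
          add_smul]
        abel
      map_smul' := by
        intro c p
        simp only [reflAt, real_inner_smul_right, sub_zero, RingHom.id_apply, smul_sub,
          smul_smul]
        congr 1
        rw [show (2 * (c * (inner ℝ a p : ℝ))) / ‖a‖ ^ 2
            = c * ((2 * (inner ℝ a p : ℝ)) / ‖a‖ ^ 2) by ring]
      invFun := reflAt a 0
      left_inv := reflAt_involutive ha
      right_inv := reflAt_involutive ha }
  norm_map' := by
    intro p
    have hna : (‖a‖:ℝ) ^ 2 ≠ 0 := pow_ne_zero 2 (norm_ne_zero_iff.2 ha)
    have h0 : reflAt a 0 p = p - ((2 * (inner ℝ a p : ℝ)) / ‖a‖ ^ 2) • a := by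
      simp [reflAt]
    have h2 : ‖reflAt a 0 p‖ ^ 2 = ‖p‖ ^ 2 := by
      rw [h0, norm_sub_sq_real, real_inner_smul_right, norm_smul, mul_pow, Real.norm_eq_abs,
        sq_abs, real_inner_comm p a]
      field_simp
      ring
    calc ‖reflAt a 0 p‖ = Real.sqrt (‖reflAt a 0 p‖ ^ 2) :=
          (Real.sqrt_sq (norm_nonneg _)).symm
      _ = ‖p‖ := by rw [h2, Real.sqrt_sq (norm_nonneg _)]

lemma measurePreserving_reflAt {a : Euc N} (ha : a ≠ 0) (b : ℝ) :
    MeasurePreserving (reflAt a b) (volume : Measure (Euc N)) volume := by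
  have h : reflAt a b = (fun w => w + (2 * b / ‖a‖ ^ 2) • a) ∘ (reflAt a 0) := by
    funext x
    simp only [Function.comp_apply, reflAt, sub_zero]
    rw [show (2 * ((inner ℝ a x : ℝ) - b)) / ‖a‖ ^ 2
        = (2 * (inner ℝ a x : ℝ)) / ‖a‖ ^ 2 - 2 * b / ‖a‖ ^ 2 by ring, sub_smul]
    abel
  rw [h]
  have h1 : MeasurePreserving (reflAt a 0) (volume : Measure (Euc N)) volume :=
    (reflLIE a ha).measurePreserving
  exact (measurePreserving_add_right volume _).comp h1

lemma continuous_reflAt (a : Euc N) (b : ℝ) : Continuous (reflAt a b) := by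
  apply continuous_id.sub
  refine Continuous.smul (f := fun x : Euc N => 2 * (inner ℝ a x - b) / ‖a‖ ^ 2) (g := fun _ : Euc N => a) ?_ continuous_const
  have hinner : Continuous fun x : Euc N => (inner ℝ a x : ℝ) := continuous_const.inner continuous_id
  exact (continuous_const.mul (hinner.sub continuous_const)).div_const _

lemma measurableEmbedding_reflAt {a : Euc N} (ha : a ≠ 0) (b : ℝ) :
    MeasurableEmbedding (reflAt a b) :=
  Homeomorph.measurableEmbedding
    { toFun := reflAt a b
      invFun := reflAt a b
      left_inv := reflAt_involutive ha
      right_inv := reflAt_involutive ha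
      continuous_toFun := continuous_reflAt a b
      continuous_invFun := continuous_reflAt a b }

lemma null_hyperplane {a : Euc N} (ha : a ≠ 0) (b : ℝ) :
    volume {x : Euc N | (inner ℝ a x : ℝ) = b} = 0 := by
  have hna : (‖a‖:ℝ) ^ 2 ≠ 0 := pow_ne_zero 2 (norm_ne_zero_iff.2 ha)
  set K : Submodule ℝ (Euc N) :=
    { carrier := {x : Euc N | (inner ℝ a x : ℝ) = 0}
      add_mem' := by
        intro p q hp hq
        simp only [Set.mem_setOf_eq, inner_add_right] at *
        rw [hp, hq]; ring
      zero_mem' := by simp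
      smul_mem' := by
        intro c p hp
        simp only [Set.mem_setOf_eq] at *
        rw [real_inner_smul_right, hp]; ring } with hKdef
  have hKne : K ≠ ⊤ := by
    intro h
    have ha' : a ∈ K := h ▸ Submodule.mem_top
    have : (inner ℝ a a : ℝ) = 0 := ha'
    rw [real_inner_self_eq_norm_sq] at this
    exact hna this
  have h0 : volume (K : Set (Euc N)) = 0 := Measure.addHaar_submodule volume K hKne
  have hset : {x : Euc N | (inner ℝ a x : ℝ) = b}
      = (fun x : Euc N => x - (b / ‖a‖ ^ 2) • a) ⁻¹' (K : Set (Euc N)) := by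
    ext x
    simp only [Set.mem_setOf_eq, Set.mem_preimage, SetLike.mem_coe]
    show _ ↔ (inner ℝ a (x - (b / ‖a‖ ^ 2) • a) : ℝ) = 0
    rw [inner_sub_right, real_inner_smul_right, real_inner_self_eq_norm_sq,
      div_mul_cancel₀ b hna, sub_eq_zero]
  rw [hset]
  have hmp : MeasurePreserving (fun x : Euc N => x - (b / ‖a‖ ^ 2) • a)
      (volume : Measure (Euc N)) volume := measurePreserving_sub_right volume _
  rw [hmp.measure_preimage ((Submodule.closed_of_finiteDimensional K).measurableSet.nullMeasurableSet)]
  exact h0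

end CSLB
end CSHelpers2
noncomputable section CSHelpers3
namespace CSLB

variable {N : ℕ}

lemma infDist_le_halfSpace {a : Euc N} (ha : a ≠ 0) {b : ℝ} {x₀ : Euc N}
    (hx₀ : x₀ ∈ halfSpace a b) :
    Metric.infDist x₀ (frontier (halfSpace a b)) ≤ ((inner ℝ a x₀ : ℝ) - b) / ‖a‖ := by
  have hna : (0:ℝ) < ‖a‖ := norm_pos_iff.2 ha
  have hna2 : (‖a‖:ℝ) ^ 2 ≠ 0 := pow_ne_zero 2 hna.ne'
  set α₀ : ℝ := (inner ℝ a x₀ : ℝ) - b with hα₀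
  have hα₀pos : 0 < α₀ := sub_pos.2 hx₀
  set q : Euc N := x₀ - (α₀ / ‖a‖ ^ 2) • a with hq
  have hinq : (inner ℝ a q : ℝ) = b := by
    rw [hq, inner_sub_right, real_inner_smul_right, real_inner_self_eq_norm_sq,
      div_mul_cancel₀ _ hna2]
    rw [hα₀]; ring
  have hqfr : q ∈ frontier (halfSpace a b) := by
    constructor
    · -- q ∈ closure
      rw [Metric.mem_closure_iff]
      intro ε hε
      refine ⟨q + (ε / (2 * ‖a‖)) • a, ?_, ?_⟩
      · show b < (inner ℝ a (q + (ε / (2 * ‖a‖)) • a) : ℝ)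
        rw [inner_add_right, real_inner_smul_right, real_inner_self_eq_norm_sq, hinq]
        have : 0 < ε / (2 * ‖a‖) * ‖a‖ ^ 2 := by positivity
        linarith
      · rw [dist_eq_norm]
        have : q - (q + (ε / (2 * ‖a‖)) • a) = -((ε / (2 * ‖a‖)) • a) := by abel
        rw [this, norm_neg, norm_smul, Real.norm_eq_abs,
          abs_of_pos (by positivity : (0:ℝ) < ε / (2 * ‖a‖))]
        have heq : ε / (2 * ‖a‖) * ‖a‖ = ε / 2 := by field_simp
        rw [heq]
        linarith
    · -- q ∉ interior
      intro hint
      have : q ∈ halfSpace a b := interior_subset hint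
      have : b < (inner ℝ a q : ℝ) := this
      rw [hinq] at this
      exact lt_irrefl b this
  have hdist : dist x₀ q = α₀ / ‖a‖ := by
    rw [dist_eq_norm, hq]
    rw [show x₀ - (x₀ - (α₀ / ‖a‖ ^ 2) • a) = (α₀ / ‖a‖ ^ 2) • a by abel]
    rw [norm_smul, Real.norm_eq_abs, abs_of_pos (by positivity : (0:ℝ) < α₀ / ‖a‖ ^ 2)]
    rw [pow_two]
    field_simp
  rw [← hdist]
  exact Metric.infDist_le_dist_of_mem hqfr

lemma sq_integral_sqrt_le (x₀ : Euc N) (ρ : ℝ) {v : Euc N → ℝ} (hv : Continuous v)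
    (hnn : ∀ z ∈ Metric.ball x₀ ρ, 0 ≤ v z) :
    (∫ z in Metric.ball x₀ ρ, Real.sqrt (v z)) ^ 2
      ≤ (volume (Metric.ball x₀ ρ)).toReal * ∫ z in Metric.ball x₀ ρ, v z := by
  set S := Metric.ball x₀ ρ with hS
  have hSm : MeasurableSet S := measurableSet_ball
  have hIv : IntegrableOn v S volume :=
    (hv.continuousOn.integrableOn_compact (isCompact_closedBall x₀ ρ)).mono_set
      Metric.ball_subset_closedBall
  have hIs : IntegrableOn (fun z => Real.sqrt (v z)) S volume :=
    ((Real.continuous_sqrt.comp hv).continuousOn.integrableOn_compact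
      (isCompact_closedBall x₀ ρ)).mono_set Metric.ball_subset_closedBall
  set I := ∫ z in S, v z with hI
  set J := ∫ z in S, Real.sqrt (v z) with hJ
  set V := (volume S).toReal with hV
  have hV0 : 0 ≤ V := ENNReal.toReal_nonneg
  have hJ0 : 0 ≤ J := setIntegral_nonneg hSm (fun z hz => Real.sqrt_nonneg _)
  have hI0 : 0 ≤ I := setIntegral_nonneg hSm hnn
  have key : ∀ t : ℝ, 0 ≤ I * (t * t) + (-(2 * J)) * t + V := by
    intro t
    rcases le_or_gt t 0 with ht | ht
    · nlinarith [mul_nonneg hI0 (mul_self_nonneg t),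
        mul_nonneg (by linarith : (0:ℝ) ≤ 2 * J) (by linarith : (0:ℝ) ≤ -t)]
    · have hpt : ∀ z ∈ S, Real.sqrt (v z) ≤ (t / 2) * v z + 1 / (2 * t) := by
        intro z hz
        have h1 : 0 ≤ v z := hnn z hz
        set u := Real.sqrt (v z) with hu
        have h2 : u ^ 2 = v z := Real.sq_sqrt h1
        have heq : t / 2 * v z + 1 / (2 * t) = (t ^ 2 * u ^ 2 + 1) / (2 * t) := by
          rw [← h2]; field_simp
        rw [heq, le_div_iff₀ (by positivity : (0:ℝ) < 2 * t)]
        nlinarith [sq_nonneg (t * u - 1)]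
      have hintc : IntegrableOn (fun _ : Euc N => 1 / (2 * t)) S volume := by
        apply (integrableOn_const_iff).mpr
        exact Or.inr measure_ball_lt_top
      have hint2 : IntegrableOn (fun z => (t / 2) * v z + 1 / (2 * t)) S volume :=
        (hIv.const_mul _).add hintc
      have h3 : J ≤ (t / 2) * I + V * (1 / (2 * t)) := by
        have h4 := setIntegral_mono_on hIs hint2 hSm hpt
        rwa [integral_add (hIv.const_mul _) hintc, integral_const_mul, setIntegral_const,
          smul_eq_mul] at h4
      have h5 : t / 2 * I + V * (1 / (2 * t)) = (t ^ 2 * I + V) / (2 * t) := by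
        field_simp
      have h6 : J * (2 * t) ≤ t ^ 2 * I + V := by
        rw [← le_div_iff₀ (by positivity : (0:ℝ) < 2 * t)]
        exact h3.trans_eq h5
      nlinarith
  have hd := discrim_le_zero key
  rw [discrim] at hd
  nlinarith

end CSLB
end CSHelpers3

set_option maxHeartbeats 2000000 in
/-- **Lemma 2.11: lower bound for the Caffarelli–Silvestre extension of a
continuous antisymmetric function which is nonnegative on `B_{2ρ}(x₀)`.** -/
theorem cs_extension_lower_bound
    (N : ℕ) [NeZero N] (s : ℝ) (hs : s ∈ Set.Ioo (0 : ℝ) 1)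
    (ρ : ℝ) (hρ : 0 < ρ) :
    ∃ c₁ : ℝ, 0 < c₁ ∧ ∃ c₂ : ℝ, 0 < c₂ ∧
      ∀ (a : Euc N), a ≠ 0 → ∀ b : ℝ,
      ∀ x₀ : Euc N, x₀ ∈ halfSpace a b →
        2 * ρ ≤ Metric.infDist x₀ (frontier (halfSpace a b)) →
      ∀ v : Euc N → ℝ, Continuous v → MemHs N s v →
        MemLp v ⊤ (volume : Measure (Euc N)) → Antisym a b v →
        (∀ x ∈ Metric.ball x₀ (2 * ρ), 0 ≤ v x) →
        ∀ x ∈ Metric.ball x₀ ρ, ∀ y ∈ Set.Ioc (0 : ℝ) 1,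
          c₁ * (∫ z in Metric.ball x₀ ρ, Real.sqrt (v z)) ^ 2 -
              c₂ * supOn (halfSpace a b \ Metric.ball x₀ (2 * ρ)) (negp v) ≤
            csExtension N s v x y / y ^ (2 * s) := by
  obtain ⟨hs0, hs1⟩ := hs
  set r : ℝ := (N : ℝ) + 2 * s with hrdef
  have hrN : (N : ℝ) < r := by rw [hrdef]; linarith
  have hr0 : (0:ℝ) < r := lt_of_le_of_lt (Nat.cast_nonneg N) hrN
  have he0 : -r / 2 < 0 := by linarith
  -- positivity of `pNs`
  have hbase1 : Integrable (fun z : Euc N => (‖z‖ ^ 2 + 1) ^ (-r / 2))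
      (volume : Measure (Euc N)) := by
    simpa using CSLB.integrable_base hrN one_pos
  have hpP : 0 < pNs N s := by
    unfold pNs
    apply inv_pos.2
    rw [← hrdef]
    refine (integral_pos_iff_support_of_nonneg
      (fun z => Real.rpow_nonneg (by positivity) _) hbase1).2 ?_
    have hsupp : Function.support (fun z : Euc N => (‖z‖ ^ 2 + 1) ^ (-r / 2)) = Set.univ :=
      Set.eq_univ_of_forall fun z => (Real.rpow_pos_of_pos (by positivity) _).ne'
    rw [hsupp]
    exact isOpen_univ.measure_pos volume ⟨0, trivial⟩
  set V : ℝ := (volume (Metric.ball (0 : Euc N) ρ)).toReal with hVdef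
  have hV0 : 0 < V :=
    ENNReal.toReal_pos (measure_ball_pos volume 0 hρ).ne' measure_ball_lt_top.ne
  set c₁' : ℝ := pNs N s * ((4*ρ^2+1) ^ (-r/2) - (4*ρ^2+1+4*ρ^2) ^ (-r/2)) with hc₁'def
  have hc₁'pos : 0 < c₁' := by
    apply mul_pos hpP
    rw [sub_pos]
    exact Real.rpow_lt_rpow_of_neg (by positivity) (by nlinarith) he0
  set Cint : ℝ := ∫ w : Euc N, (1 + ‖w‖) ^ (-r) with hCintdef
  have hCint0 : 0 ≤ Cint := integral_nonneg fun w => Real.rpow_nonneg (by positivity) _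
  set C₂ : ℝ := pNs N s * ((1 + 1/ρ) ^ r * Cint) with hC₂def
  have hC₂0 : 0 ≤ C₂ :=
    mul_nonneg hpP.le (mul_nonneg (Real.rpow_nonneg (by positivity) _) hCint0)
  refine ⟨c₁' / V, by positivity, C₂ + 1, by linarith, ?_⟩
  intro a ha b x₀ hx₀ hdist v hvc hvHs hvL hvA hvnn x hx y hy
  obtain ⟨hy0, hy1⟩ := hy
  have hna : (0:ℝ) < ‖a‖ := norm_pos_iff.2 ha
  -- inner product bounds
  have hax₀ : 2 * ρ * ‖a‖ ≤ (inner ℝ a x₀ : ℝ) - b := by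
    have h1 := CSLB.infDist_le_halfSpace ha hx₀
    have h2 : 2 * ρ ≤ ((inner ℝ a x₀ : ℝ) - b) / ‖a‖ := le_trans hdist h1
    rw [le_div_iff₀ hna] at h2
    linarith
  have hinner : ∀ z : Euc N, (2 * ρ - dist z x₀) * ‖a‖ ≤ (inner ℝ a z : ℝ) - b := by
    intro z
    have h1 : |(inner ℝ a (z - x₀) : ℝ)| ≤ ‖a‖ * ‖z - x₀‖ := abs_real_inner_le_norm a (z - x₀)
    have h2 : (inner ℝ a z : ℝ) - b = ((inner ℝ a x₀ : ℝ) - b) + (inner ℝ a (z - x₀) : ℝ) := by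
      rw [inner_sub_right]; ring
    rw [h2, dist_eq_norm]
    have h3 : -(‖a‖ * ‖z - x₀‖) ≤ (inner ℝ a (z - x₀) : ℝ) := (abs_le.1 h1).1
    nlinarith [hax₀, norm_nonneg a]
  have hball2 : ∀ z ∈ Metric.ball x₀ (2*ρ), 0 < (inner ℝ a z : ℝ) - b := by
    intro z hz
    have h1 := hinner z
    have h2 : dist z x₀ < 2*ρ := mem_ball.1 hz
    nlinarith
  have hB₂H : Metric.ball x₀ (2*ρ) ⊆ halfSpace a b := by
    intro z hz
    have := hball2 z hz
    show b < (inner ℝ a z : ℝ)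
    linarith
  have hballρ : ∀ z ∈ Metric.ball x₀ ρ, ρ * ‖a‖ ≤ (inner ℝ a z : ℝ) - b := by
    intro z hz
    have h1 := hinner z
    have h2 : dist z x₀ < ρ := mem_ball.1 hz
    nlinarith
  have hxH : x ∈ halfSpace a b := hB₂H (Metric.ball_subset_ball (by linarith) hx)
  have hαx : ρ * ‖a‖ ≤ (inner ℝ a x : ℝ) - b := hballρ x hx
  -- the kernels
  have hbase_pos : ∀ w : Euc N, 0 < ‖x - w‖ ^ 2 + y ^ 2 := fun w =>
    add_pos_of_nonneg_of_pos (by positivity) (pow_pos hy0 2)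
  set k : Euc N → ℝ := fun z => pNs N s * (‖x - z‖ ^ 2 + y ^ 2) ^ (-r/2) with hkdef
  set kQ : Euc N → ℝ := fun z => pNs N s * (‖x - reflAt a b z‖ ^ 2 + y ^ 2) ^ (-r/2) with hkQdef
  have hkpos : ∀ z, 0 < k z := fun z => mul_pos hpP (Real.rpow_pos_of_pos (hbase_pos z) _)
  have hkQpos : ∀ z, 0 < kQ z :=
    fun z => mul_pos hpP (Real.rpow_pos_of_pos (hbase_pos (reflAt a b z)) _)
  have hkcont : Continuous k := by
    apply continuous_const.mul
    apply Continuous.rpow_const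
    · fun_prop
    · exact fun z => Or.inl (hbase_pos z).ne'
  have hkQcont : Continuous kQ := by
    apply continuous_const.mul
    apply Continuous.rpow_const
    · exact ((continuous_const.sub (CSLB.continuous_reflAt a b)).norm.pow 2).add continuous_const
    · exact fun z => Or.inl (hbase_pos (reflAt a b z)).ne'
  -- integrability
  obtain ⟨M₀, hM₀0, hM₀⟩ := CSLB.exists_global_bound hvc hvL
  have Int_k : Integrable k (volume : Measure (Euc N)) :=
    (CSLB.integrable_shift hrN x hy0).const_mul _
  have Int_kQ : Integrable kQ (volume : Measure (Euc N)) := by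
    have h := ((CSLB.measurePreserving_reflAt ha b).integrable_comp_emb
        (CSLB.measurableEmbedding_reflAt ha b)).2 Int_k
    exact h.congr (Filter.Eventually.of_forall fun z => rfl)
  have Int_vk : Integrable (fun z => v z * k z) (volume : Measure (Euc N)) := by
    apply Integrable.mono' (Int_k.const_mul M₀) ((hvc.mul hkcont).aestronglyMeasurable)
    refine Filter.Eventually.of_forall fun z => ?_
    rw [Real.norm_eq_abs, Pi.mul_apply, abs_mul, abs_of_pos (hkpos z)]
    exact mul_le_mul_of_nonneg_right (hM₀ z) (hkpos z).le
  have Int_vkQ : Integrable (fun z => v z * kQ z) (volume : Measure (Euc N)) := by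
    apply Integrable.mono' (Int_kQ.const_mul M₀) ((hvc.mul hkQcont).aestronglyMeasurable)
    refine Filter.Eventually.of_forall fun z => ?_
    rw [Real.norm_eq_abs, Pi.mul_apply, abs_mul, abs_of_pos (hkQpos z)]
    exact mul_le_mul_of_nonneg_right (hM₀ z) (hkQpos z).le
  have Int_vdiff : Integrable (fun z => v z * (k z - kQ z)) (volume : Measure (Euc N)) := by
    have h := Int_vk.sub Int_vkQ
    simpa [mul_sub, Pi.sub_def] using h
  have hIdiff : Integrable (fun z => k z - kQ z) (volume : Measure (Euc N)) := Int_k.sub Int_kQ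
  have hHopen : IsOpen (halfSpace a b) := by
    have heq : halfSpace a b = (fun z : Euc N => (inner ℝ a z : ℝ)) ⁻¹' Set.Ioi b := rfl
    rw [heq]
    exact isOpen_Ioi.preimage (continuous_const.inner continuous_id)
  have hHB₂meas : MeasurableSet (halfSpace a b \ Metric.ball x₀ (2*ρ)) :=
    hHopen.measurableSet.diff measurableSet_ball
  -- splitting of the integral
  have hsplit1 : ∫ z, v z * k z
      = (∫ z in Metric.ball x₀ (2*ρ), v z * k z) + ∫ z in (Metric.ball x₀ (2*ρ))ᶜ, v z * k z :=
    (integral_add_compl measurableSet_ball Int_vk).symm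
  have hB₂c : (Metric.ball x₀ (2*ρ))ᶜ
      = (halfSpace a b \ Metric.ball x₀ (2*ρ)) ∪ (halfSpace a b)ᶜ := by
    ext z
    constructor
    · intro hz
      by_cases hzH : z ∈ halfSpace a b
      · exact Or.inl ⟨hzH, hz⟩
      · exact Or.inr hzH
    · rintro (⟨_, hz⟩ | hz)
      · exact hz
      · exact fun hzB => hz (hB₂H hzB)
  have hsplit2 : ∫ z in (Metric.ball x₀ (2*ρ))ᶜ, v z * k z
      = (∫ z in halfSpace a b \ Metric.ball x₀ (2*ρ), v z * k z)
        + ∫ z in (halfSpace a b)ᶜ, v z * k z := by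
    rw [hB₂c]
    exact setIntegral_union (Set.disjoint_left.mpr fun z hz hzc => hzc hz.1)
      hHopen.measurableSet.compl Int_vk.integrableOn Int_vk.integrableOn
  -- reflection identity
  have hQpre : reflAt a b ⁻¹' ((halfSpace a b)ᶜ) = {z : Euc N | b ≤ (inner ℝ a z : ℝ)} := by
    ext z
    simp only [Set.mem_preimage, Set.mem_compl_iff, halfSpace, Set.mem_setOf_eq, not_lt,
      CSLB.inner_reflAt ha b z]
    constructor <;> intro h <;> linarith
  have hHc : ∫ z in (halfSpace a b)ᶜ, v z * k z = - ∫ z in halfSpace a b, v z * kQ z := by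
    have h1 := (CSLB.measurePreserving_reflAt ha b).setIntegral_preimage_emb
      (CSLB.measurableEmbedding_reflAt ha b) (fun z => v z * k z) ((halfSpace a b)ᶜ)
    rw [← h1, hQpre]
    have h2 : ∀ z : Euc N, v (reflAt a b z) * k (reflAt a b z) = -(v z * kQ z) := by
      intro z
      rw [hvA z]
      simp only [hkdef, hkQdef]
      ring
    calc ∫ z in {z : Euc N | b ≤ (inner ℝ a z : ℝ)}, v (reflAt a b z) * k (reflAt a b z)
        = ∫ z in {z : Euc N | b ≤ (inner ℝ a z : ℝ)}, -(v z * kQ z) := by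
          exact integral_congr_ae (Filter.Eventually.of_forall fun z => h2 z)
      _ = - ∫ z in {z : Euc N | b ≤ (inner ℝ a z : ℝ)}, v z * kQ z := integral_neg _
      _ = - ∫ z in halfSpace a b, v z * kQ z := by
          congr 1
          apply setIntegral_congr_set
          rw [MeasureTheory.ae_eq_set]
          constructor
          · apply measure_mono_null _ (CSLB.null_hyperplane ha b)
            intro z hz
            simp only [Set.mem_diff, Set.mem_setOf_eq, halfSpace, not_lt] at hz
            exact le_antisymm hz.2 hz.1
          · have hempty : halfSpace a b \ {z : Euc N | b ≤ (inner ℝ a z : ℝ)} = ∅ := by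
              ext z
              simp only [Set.mem_diff, Set.mem_setOf_eq, halfSpace, Set.mem_empty_iff_false,
                iff_false, not_and, not_not]
              intro h
              exact le_of_lt h
            rw [hempty]
            simp
  have hHsplit : ∫ z in halfSpace a b, v z * kQ z
      = (∫ z in Metric.ball x₀ (2*ρ), v z * kQ z)
        + ∫ z in halfSpace a b \ Metric.ball x₀ (2*ρ), v z * kQ z := by
    rw [← setIntegral_union Set.disjoint_sdiff_right hHB₂meas
        Int_vkQ.integrableOn Int_vkQ.integrableOn, Set.union_diff_cancel hB₂H]
  have hdiffB₂ : (∫ z in Metric.ball x₀ (2*ρ), v z * k z)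
      - (∫ z in Metric.ball x₀ (2*ρ), v z * kQ z)
      = ∫ z in Metric.ball x₀ (2*ρ), v z * (k z - kQ z) := by
    rw [← integral_sub Int_vk.integrableOn Int_vkQ.integrableOn]
    simp only [mul_sub]
  have hdiffH : (∫ z in halfSpace a b \ Metric.ball x₀ (2*ρ), v z * k z)
      - (∫ z in halfSpace a b \ Metric.ball x₀ (2*ρ), v z * kQ z)
      = ∫ z in halfSpace a b \ Metric.ball x₀ (2*ρ), v z * (k z - kQ z) := by
    rw [← integral_sub Int_vk.integrableOn Int_vkQ.integrableOn]
    simp only [mul_sub]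
  have htotal : ∫ z, v z * k z
      = (∫ z in Metric.ball x₀ (2*ρ), v z * (k z - kQ z))
        + ∫ z in halfSpace a b \ Metric.ball x₀ (2*ρ), v z * (k z - kQ z) := by
    rw [← hdiffB₂, ← hdiffH, hsplit1, hsplit2, hHc, hHsplit]
    ring
  -- kernel difference bounds
  have hkdiff_nonneg : ∀ z ∈ halfSpace a b, 0 ≤ k z - kQ z := by
    intro z hz
    have hz' : 0 < (inner ℝ a z : ℝ) - b := sub_pos.2 hz
    have hx' : 0 < (inner ℝ a x : ℝ) - b := by nlinarith [hαx, mul_pos hρ hna]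
    have hd := CSLB.norm_sub_reflAt ha b x z
    have h1 : ‖x - z‖ ^ 2 + y ^ 2 ≤ ‖x - reflAt a b z‖ ^ 2 + y ^ 2 := by
      rw [hd]
      have h2 : 0 ≤ 4 * (((inner ℝ a x : ℝ) - b) * ((inner ℝ a z : ℝ) - b)) / ‖a‖ ^ 2 := by
        positivity
      linarith
    have h3 := Real.rpow_le_rpow_of_nonpos (hbase_pos z) h1 he0.le
    have h4 := mul_le_mul_of_nonneg_left h3 hpP.le
    simp only [hkdef, hkQdef]
    linarith
  have hkdiff_lb : ∀ z ∈ Metric.ball x₀ ρ, c₁' ≤ k z - kQ z := by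
    intro z hz
    have hαz := hballρ z hz
    have hna2 : (0:ℝ) < ‖a‖ ^ 2 := by positivity
    have hprod : 4 * ρ^2 ≤ 4 * (((inner ℝ a x : ℝ) - b) * ((inner ℝ a z : ℝ) - b)) / ‖a‖ ^ 2 := by
      rw [le_div_iff₀ hna2]
      have h1 : (ρ * ‖a‖) * (ρ * ‖a‖) ≤ ((inner ℝ a x : ℝ) - b) * ((inner ℝ a z : ℝ) - b) :=
        mul_le_mul hαx hαz (by positivity) (le_trans (by positivity) hαx)
      nlinarith
    have hdQ : ‖x - z‖ ^ 2 + 4*ρ^2 ≤ ‖x - reflAt a b z‖ ^ 2 := by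
      rw [CSLB.norm_sub_reflAt ha b x z]
      linarith
    have hu4 : ‖x - z‖ ^ 2 ≤ 4*ρ^2 := by
      have h2 : dist x x₀ < ρ := mem_ball.1 hx
      have h3 : dist x₀ z < ρ := by rw [dist_comm]; exact mem_ball.1 hz
      have h4 := dist_triangle x x₀ z
      have h1 : dist x z < 2*ρ := by linarith
      rw [show ‖x - z‖ = dist x z from (dist_eq_norm x z).symm]
      nlinarith [dist_nonneg (x := x) (y := z)]
    have hy2 : y ^ 2 ≤ 1 := by nlinarith
    have ht0 : 0 < ‖x - z‖ ^ 2 + y ^ 2 := hbase_pos z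
    have htT : ‖x - z‖ ^ 2 + y ^ 2 ≤ 4*ρ^2+1 := by linarith
    have step1 : (‖x - reflAt a b z‖ ^ 2 + y ^ 2) ^ (-r/2)
        ≤ ((‖x - z‖ ^ 2 + y ^ 2) + 4*ρ^2) ^ (-r/2) := by
      apply Real.rpow_le_rpow_of_nonpos _ (by linarith) he0.le
      nlinarith [sq_nonneg ρ]
    have step2 : (4*ρ^2+1) ^ (-r/2) - (4*ρ^2+1+4*ρ^2) ^ (-r/2)
        ≤ (‖x - z‖ ^ 2 + y ^ 2) ^ (-r/2) - ((‖x - z‖ ^ 2 + y ^ 2) + 4*ρ^2) ^ (-r/2) :=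
      CSLB.rpow_sub_rpow_le he0 (by positivity) ht0 htT
    have step3 : (4*ρ^2+1) ^ (-r/2) - (4*ρ^2+1+4*ρ^2) ^ (-r/2)
        ≤ (‖x - z‖ ^ 2 + y ^ 2) ^ (-r/2) - (‖x - reflAt a b z‖ ^ 2 + y ^ 2) ^ (-r/2) := by
      linarith
    calc c₁' = pNs N s * ((4*ρ^2+1) ^ (-r/2) - (4*ρ^2+1+4*ρ^2) ^ (-r/2)) := hc₁'def
      _ ≤ pNs N s * ((‖x - z‖ ^ 2 + y ^ 2) ^ (-r/2)
          - (‖x - reflAt a b z‖ ^ 2 + y ^ 2) ^ (-r/2)) :=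
          mul_le_mul_of_nonneg_left step3 hpP.le
      _ = k z - kQ z := by simp only [hkdef, hkQdef]; ring
  -- lower bound on the inner ball
  have hIvball : ∀ ρ' : ℝ, IntegrableOn v (Metric.ball x₀ ρ') volume := fun ρ' =>
    (hvc.continuousOn.integrableOn_compact (isCompact_closedBall x₀ ρ')).mono_set
      Metric.ball_subset_closedBall
  have hsplitB₂ρ : ∫ z in Metric.ball x₀ (2*ρ), v z * (k z - kQ z)
      = (∫ z in Metric.ball x₀ ρ, v z * (k z - kQ z))
        + ∫ z in Metric.ball x₀ (2*ρ) \ Metric.ball x₀ ρ, v z * (k z - kQ z) := by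
    rw [← setIntegral_union Set.disjoint_sdiff_right
        (measurableSet_ball.diff measurableSet_ball)
        Int_vdiff.integrableOn Int_vdiff.integrableOn,
      Set.union_diff_cancel (Metric.ball_subset_ball (by linarith))]
  have hB₂ρnn : 0 ≤ ∫ z in Metric.ball x₀ (2*ρ) \ Metric.ball x₀ ρ, v z * (k z - kQ z) :=
    setIntegral_nonneg (measurableSet_ball.diff measurableSet_ball)
      fun z hz => mul_nonneg (hvnn z hz.1) (hkdiff_nonneg z (hB₂H hz.1))
  have hLB1 : c₁' * ∫ z in Metric.ball x₀ ρ, v z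
      ≤ ∫ z in Metric.ball x₀ ρ, v z * (k z - kQ z) := by
    rw [← integral_const_mul]
    apply setIntegral_mono_on ((hIvball ρ).const_mul c₁') Int_vdiff.integrableOn
      measurableSet_ball
    intro z hz
    have h1 := hkdiff_lb z hz
    have h2 : 0 ≤ v z := hvnn z (Metric.ball_subset_ball (by linarith) hz)
    calc c₁' * v z = v z * c₁' := mul_comm _ _
      _ ≤ v z * (k z - kQ z) := mul_le_mul_of_nonneg_left h1 h2
  have hCS := CSLB.sq_integral_sqrt_le x₀ ρ hvc
    (fun z hz => hvnn z (Metric.ball_subset_ball (by linarith) hz))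
  have hVeq : (volume (Metric.ball x₀ ρ)).toReal = V := by
    rw [hVdef]
    congr 1
    exact Measure.addHaar_ball_center volume x₀ ρ
  have hJchain : c₁' / V * (∫ z in Metric.ball x₀ ρ, Real.sqrt (v z)) ^ 2
      ≤ c₁' * ∫ z in Metric.ball x₀ ρ, v z := by
    rw [hVeq] at hCS
    rw [div_mul_eq_mul_div, div_le_iff₀ hV0]
    calc c₁' * (∫ z in Metric.ball x₀ ρ, Real.sqrt (v z)) ^ 2
        ≤ c₁' * (V * ∫ z in Metric.ball x₀ ρ, v z) :=
          mul_le_mul_of_nonneg_left hCS hc₁'pos.le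
      _ = c₁' * (∫ z in Metric.ball x₀ ρ, v z) * V := by ring
  -- lower bound on the outer region
  set M : ℝ := supOn (halfSpace a b \ Metric.ball x₀ (2 * ρ)) (negp v) with hMdef
  have hM0 : 0 ≤ M := by
    apply Real.sSup_nonneg
    rintro w ⟨z, hz, rfl⟩
    exact le_max_right _ _
  have hbddM : BddAbove ((negp v) '' (halfSpace a b \ Metric.ball x₀ (2 * ρ))) := by
    refine ⟨M₀, ?_⟩
    rintro w ⟨z, hz, rfl⟩
    have h1 := abs_le.1 (hM₀ z)
    apply max_le _ hM₀0
    linarith [h1.1]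
  have hvM : ∀ z ∈ halfSpace a b \ Metric.ball x₀ (2*ρ), -M ≤ v z := by
    intro z hz
    have h1 : negp v z ≤ M := le_csSup hbddM ⟨z, hz, rfl⟩
    have h2 : -(v z) ≤ negp v z := le_max_left _ _
    linarith
  set S' : Set (Euc N) := {z : Euc N | ρ ≤ ‖x - z‖} with hS'def
  have hS'meas : MeasurableSet S' := by
    apply IsClosed.measurableSet
    exact isClosed_le continuous_const (continuous_const.sub continuous_id).norm
  have hsubS' : halfSpace a b \ Metric.ball x₀ (2*ρ) ⊆ S' := by
    intro z hz
    have h1 : 2*ρ ≤ dist z x₀ := not_lt.1 fun h => hz.2 (mem_ball.2 h)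
    have h2 : dist x x₀ < ρ := mem_ball.1 hx
    have h3 := dist_triangle z x x₀
    show ρ ≤ ‖x - z‖
    rw [show ‖x - z‖ = dist x z from (dist_eq_norm x z).symm, dist_comm x z]
    linarith
  have hmaj_base : Integrable (fun w : Euc N => (1 + ‖w‖) ^ (-r))
      (volume : Measure (Euc N)) := by
    apply integrable_one_add_norm
    simpa [finrank_euclideanSpace_fin] using hrN
  have hmaj_int : Integrable (fun z : Euc N => pNs N s * (1+1/ρ)^r * (1 + ‖x - z‖) ^ (-r))
      (volume : Measure (Euc N)) := (hmaj_base.comp_sub_left x).const_mul _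
  have hptS' : ∀ z ∈ S', k z ≤ pNs N s * (1+1/ρ)^r * (1 + ‖x - z‖) ^ (-r) := by
    intro z hz
    have hw : ρ ≤ ‖x - z‖ := hz
    have hw0 : 0 < ‖x - z‖ := lt_of_lt_of_le hρ hw
    have h1 : (‖x - z‖ ^ 2 + y ^ 2) ^ (-r/2) ≤ ((‖x - z‖ ^ 2 : ℝ)) ^ (-r/2) :=
      Real.rpow_le_rpow_of_nonpos (by positivity) (by nlinarith [sq_nonneg y]) he0.le
    have h2 : ((‖x - z‖ ^ 2 : ℝ)) ^ (-r/2) = ‖x - z‖ ^ (-r) := by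
      rw [← Real.rpow_natCast ‖x - z‖ 2, ← Real.rpow_mul (norm_nonneg _)]
      congr 1
      push_cast
      ring
    have hA : (0:ℝ) < 1 + 1/ρ := by positivity
    have h4 : 1 + ‖x - z‖ ≤ (1 + 1/ρ) * ‖x - z‖ := by
      rw [add_mul, one_mul]
      have h5 : 1 ≤ 1/ρ * ‖x - z‖ := by
        rw [div_mul_eq_mul_div, one_mul, le_div_iff₀ hρ]
        linarith
      linarith
    have h5 : (1 + ‖x - z‖) ^ r ≤ (1+1/ρ)^r * ‖x - z‖ ^ r := by
      rw [← Real.mul_rpow hA.le (norm_nonneg _)]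
      exact Real.rpow_le_rpow (by positivity) h4 hr0.le
    have hp1 : 0 < ‖x - z‖ ^ r := Real.rpow_pos_of_pos hw0 r
    have hp2 : (0:ℝ) < (1 + ‖x - z‖) ^ r := Real.rpow_pos_of_pos (by positivity) r
    have h3 : ‖x - z‖ ^ (-r) ≤ (1+1/ρ)^r * (1 + ‖x - z‖) ^ (-r) := by
      rw [Real.rpow_neg (norm_nonneg _), Real.rpow_neg (by positivity : (0:ℝ) ≤ 1 + ‖x - z‖)]
      have key : (1 + ‖x - z‖)^r * (‖x - z‖^r)⁻¹ ≤ (1+1/ρ)^r := by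
        rw [← div_eq_mul_inv, div_le_iff₀ hp1]
        exact h5
      calc (‖x - z‖^r)⁻¹
          = ((1 + ‖x - z‖)^r * (‖x - z‖^r)⁻¹) * ((1 + ‖x - z‖)^r)⁻¹ := by
            field_simp
        _ ≤ (1+1/ρ)^r * ((1 + ‖x - z‖)^r)⁻¹ :=
            mul_le_mul_of_nonneg_right key (inv_nonneg.2 hp2.le)
    calc k z = pNs N s * (‖x - z‖ ^ 2 + y ^ 2) ^ (-r/2) := by simp only [hkdef]
      _ ≤ pNs N s * ((1+1/ρ)^r * (1 + ‖x - z‖) ^ (-r)) := by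
          apply mul_le_mul_of_nonneg_left _ hpP.le
          calc (‖x - z‖ ^ 2 + y ^ 2) ^ (-r/2) ≤ ((‖x - z‖ ^ 2 : ℝ)) ^ (-r/2) := h1
            _ = ‖x - z‖ ^ (-r) := h2
            _ ≤ (1+1/ρ)^r * (1 + ‖x - z‖) ^ (-r) := h3
      _ = pNs N s * (1+1/ρ)^r * (1 + ‖x - z‖) ^ (-r) := by ring
  have hkS' : ∫ z in halfSpace a b \ Metric.ball x₀ (2*ρ), k z ≤ C₂ := by
    have step_a : ∫ z in halfSpace a b \ Metric.ball x₀ (2*ρ), k z ≤ ∫ z in S', k z :=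
      setIntegral_mono_set Int_k.integrableOn
        (Filter.Eventually.of_forall fun z => (hkpos z).le)
        (HasSubset.Subset.eventuallyLE hsubS')
    have step_b : ∫ z in S', k z
        ≤ ∫ z in S', pNs N s * (1+1/ρ)^r * (1 + ‖x - z‖) ^ (-r) :=
      setIntegral_mono_on Int_k.integrableOn hmaj_int.integrableOn hS'meas hptS'
    have step_c : ∫ z in S', pNs N s * (1+1/ρ)^r * (1 + ‖x - z‖) ^ (-r)
        ≤ ∫ z : Euc N, pNs N s * (1+1/ρ)^r * (1 + ‖x - z‖) ^ (-r) := by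
      apply setIntegral_le_integral hmaj_int
      refine Filter.Eventually.of_forall fun z => ?_
      exact mul_nonneg (mul_nonneg hpP.le (Real.rpow_nonneg (by positivity) _))
        (Real.rpow_nonneg (by positivity) _)
    have step_d : ∫ z : Euc N, pNs N s * (1+1/ρ)^r * (1 + ‖x - z‖) ^ (-r) = C₂ := by
      rw [integral_const_mul,
        integral_sub_left_eq_self (fun w : Euc N => (1 + ‖w‖) ^ (-r)) volume x,
        hC₂def, hCintdef]
      ring
    linarith
  have hLB2 : -(M * C₂) ≤ ∫ z in halfSpace a b \ Metric.ball x₀ (2*ρ), v z * (k z - kQ z) := by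
    have step1 : ∫ z in halfSpace a b \ Metric.ball x₀ (2*ρ), (-M) * (k z - kQ z)
        ≤ ∫ z in halfSpace a b \ Metric.ball x₀ (2*ρ), v z * (k z - kQ z) := by
      apply setIntegral_mono_on (hIdiff.const_mul (-M)).integrableOn
        Int_vdiff.integrableOn hHB₂meas
      intro z hz
      exact mul_le_mul_of_nonneg_right (hvM z hz) (hkdiff_nonneg z hz.1)
    have step2 : ∫ z in halfSpace a b \ Metric.ball x₀ (2*ρ), (-M) * (k z - kQ z)
        = -M * ((∫ z in halfSpace a b \ Metric.ball x₀ (2*ρ), k z)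
          - ∫ z in halfSpace a b \ Metric.ball x₀ (2*ρ), kQ z) := by
      rw [integral_const_mul, integral_sub Int_k.integrableOn Int_kQ.integrableOn]
    have hBnn : 0 ≤ ∫ z in halfSpace a b \ Metric.ball x₀ (2*ρ), kQ z :=
      setIntegral_nonneg hHB₂meas fun z _ => (hkQpos z).le
    have h6 : M * (∫ z in halfSpace a b \ Metric.ball x₀ (2*ρ), k z) ≤ M * C₂ :=
      mul_le_mul_of_nonneg_left hkS' hM0
    have h7 : 0 ≤ M * ∫ z in halfSpace a b \ Metric.ball x₀ (2*ρ), kQ z :=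
      mul_nonneg hM0 hBnn
    rw [step2] at step1
    nlinarith
  -- the extension identity
  have hext : csExtension N s v x y / y ^ (2*s) = ∫ z, v z * k z := by
    have hy2s : (0:ℝ) < y ^ (2*s) := Real.rpow_pos_of_pos hy0 _
    unfold csExtension
    rw [← hrdef]
    have hintg : ∀ z : Euc N,
        v z * (pNs N s * y ^ (2*s) * (‖x - z‖ ^ 2 + y ^ 2) ^ (-r/2))
          = y ^ (2*s) * (v z * k z) := by
      intro z
      simp only [hkdef]
      ring
    simp_rw [hintg]
    rw [integral_const_mul, mul_div_cancel_left₀ _ hy2s.ne']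
  rw [hext, htotal]
  have final1 : c₁' / V * (∫ z in Metric.ball x₀ ρ, Real.sqrt (v z)) ^ 2
      ≤ ∫ z in Metric.ball x₀ (2*ρ), v z * (k z - kQ z) := by
    rw [hsplitB₂ρ]
    have h := hJchain.trans hLB1
    linarith
  have final2 : -((C₂ + 1) * M)
      ≤ ∫ z in halfSpace a b \ Metric.ball x₀ (2*ρ), v z * (k z - kQ z) := by
    nlinarith [hLB2, hM0]
  linarith [final1, final2]
end

section
/- Let Ω ⊂ ℝ^N satisfy (D1) and let M ⊂ C_0(Ω) be a bounded and equicontinuous subset. For λ ∈ [0,l) define I_λ(M) := inf{V_λ u(x) : u ∈ M, x ∈ Ω_λ}. Then the map λ ↦ I_λ(M) is left continuous on (0,l): for every λ₀ ∈ (0,l), I_λ(M) → I_{λ₀}(M) as λ → λ₀ with λ < λ₀. -/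
open MeasureTheory Real Set Filter Topology Metric
open scoped NNReal ENNReal

lemma dist_update_aux {N : ℕ} [NeZero N] (g : Fin N → ℝ) (a b : ℝ) :
    dist (ofFun (Function.update g 0 a) : Euc N) (ofFun (Function.update g 0 b)) = |a - b| := by
  rw [EuclideanSpace.dist_eq]
  have h : ∀ i : Fin N, dist ((ofFun (Function.update g 0 a) : Euc N) i)
      ((ofFun (Function.update g 0 b) : Euc N) i) ^ 2
      = (if i = 0 then dist a b ^ 2 else 0) := by
    intro i
    by_cases hi : i = 0
    · subst hi; simp [ofFun]
    · simp [ofFun, Function.update_of_ne hi, hi]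
  rw [Finset.sum_congr rfl (fun i _ => h i)]
  simp [Real.dist_eq, Real.sqrt_sq_eq_abs]

lemma dist_Qlam_Qlam {N : ℕ} [NeZero N] (lam lam' : ℝ) (x : Euc N) :
    dist (Qlam N lam x) (Qlam N lam' x) = |2 * lam - 2 * lam'| := by
  show dist (ofFun (Function.update (toFun x) 0 (2 * lam - toFun x 0)) : Euc N)
      (ofFun (Function.update (toFun x) 0 (2 * lam' - toFun x 0))) = _
  rw [dist_update_aux]
  congr 1; ring

lemma dist_Qlam_self {N : ℕ} [NeZero N] (lam : ℝ) (x : Euc N) :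
    dist (Qlam N lam x) x = |2 * lam - 2 * toFun x 0| := by
  have hx : (ofFun (Function.update (toFun x) 0 (toFun x 0)) : Euc N) = x := by
    simp [ofFun, toFun]
  calc dist (Qlam N lam x) x
      = dist (ofFun (Function.update (toFun x) 0 (2 * lam - toFun x 0)) : Euc N)
        (ofFun (Function.update (toFun x) 0 (toFun x 0))) := by rw [hx]; rfl
    _ = |2 * lam - 2 * toFun x 0| := by rw [dist_update_aux]; congr 1; ring

/-- **Lemma 3.4: left continuity of `λ ↦ I_λ(M)` for a bounded equicontinuous
family `M ⊂ C_0(Ω)`.** -/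
theorem left_continuity_of_inf
    (N : ℕ) [NeZero N]
    (Ω : Set (Euc N)) (hD1 : CondD1 N Ω)
    (M : Set (Euc N → ℝ))
    (hM0 : ∀ w ∈ M, MemC0 N Ω w)
    (hMb : ∃ C : ℝ, ∀ w ∈ M, ∀ x, |w x| ≤ C)
    (hMeq : ∀ ε : ℝ, 0 < ε → ∃ δ : ℝ, 0 < δ ∧
      ∀ w ∈ M, ∀ x x' : Euc N, dist x x' < δ → |w x - w x'| < ε)
    (lam₀ : ℝ) (h0 : 0 < lam₀) (hl : lam₀ < lmax N Ω) :
    Tendsto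
      (fun lam : ℝ =>
        sInf {y : ℝ | ∃ w ∈ M, ∃ x ∈ Ω ∩ Hlam N lam, y = Vlam N lam w x})
      (nhdsWithin lam₀ (Set.Iio lam₀))
      (nhds (sInf {y : ℝ | ∃ w ∈ M, ∃ x ∈ Ω ∩ Hlam N lam₀, y = Vlam N lam₀ w x})) := by
  set S : ℝ → Set ℝ :=
    fun lam => {y : ℝ | ∃ w ∈ M, ∃ x ∈ Ω ∩ Hlam N lam, y = Vlam N lam w x} with hS
  rcases M.eq_empty_or_nonempty with hM | ⟨w₀, hw₀⟩
  · have hempty : ∀ lam : ℝ, S lam = (∅ : Set ℝ) := by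
      intro lam
      ext y
      simp [hS, hM]
    show Tendsto (fun lam => sInf (S lam)) _ (nhds (sInf (S lam₀)))
    simp only [hempty]
    exact tendsto_const_nhds
  obtain ⟨C, hC⟩ := hMb
  obtain ⟨hopen, hconn, hbound, _, hsym⟩ := hD1
  -- a point of Ω with first coordinate above lam₀
  have himne : ((fun x : Euc N => toFun x 0) '' Ω).Nonempty :=
    hconn.nonempty.image _
  obtain ⟨a, ⟨x₁, hx₁Ω, rfl⟩, hx₁lt⟩ := exists_lt_of_lt_csSup himne hl
  -- lower boundedness of all the sets S lam
  have hbdd : ∀ lam : ℝ, BddBelow (S lam) := by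
    intro lam
    refine ⟨-(C + C), ?_⟩
    rintro y ⟨w, hw, x, hx, rfl⟩
    have h1 := abs_le.1 (hC w hw (Qlam N lam x))
    have h2 := abs_le.1 (hC w hw x)
    simp only [Vlam]
    linarith [h1.1, h2.2]
  -- nonemptiness
  have hmemS : ∀ lam : ℝ, lam ≤ lam₀ → Vlam N lam w₀ x₁ ∈ S lam := by
    intro lam hlam
    exact ⟨w₀, hw₀, x₁, ⟨hx₁Ω, show lam < toFun x₁ 0 from lt_of_le_of_lt hlam hx₁lt⟩, rfl⟩
  have hne : ∀ lam : ℝ, lam ≤ lam₀ → (S lam).Nonempty :=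
    fun lam hlam => ⟨_, hmemS lam hlam⟩
  -- sInf (S lam₀) ≤ 0
  have hx₁0 : 0 < toFun x₁ 0 := h0.trans hx₁lt
  have hI0 : sInf (S lam₀) ≤ 0 := by
    have : ∀ η : ℝ, 0 < η → sInf (S lam₀) ≤ 0 + η := by
      intro η hη
      obtain ⟨δ, hδ, hδM⟩ := hMeq η hη
      set η' : ℝ := min (δ / 4) ((toFun x₁ 0 - lam₀) / 2) with hη'
      have hη'pos : 0 < η' := by
        apply lt_min <;> [positivity; linarith [hx₁lt]]
      have hη'1 : η' ≤ δ / 4 := min_le_left _ _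
      have hη'2 : η' ≤ (toFun x₁ 0 - lam₀) / 2 := min_le_right _ _
      set σ : ℝ := (lam₀ + η') / toFun x₁ 0 with hσ
      have hσpos : 0 < σ := by positivity
      have hσle : σ ≤ 1 := by
        rw [hσ, div_le_one hx₁0]; linarith
      have hx' : flipFirst σ x₁ ∈ Ω :=
        hsym x₁ hx₁Ω σ ⟨by linarith, hσle⟩
      have hx'0 : toFun (flipFirst σ x₁) 0 = lam₀ + η' := by
        have e : toFun (flipFirst σ x₁) 0 = σ * toFun x₁ 0 := by simp [flipFirst, toFun, ofFun]
        rw [e, hσ, div_mul_cancel₀ _ (ne_of_gt hx₁0)]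
      have hmem : Vlam N lam₀ w₀ (flipFirst σ x₁) ∈ S lam₀ :=
        ⟨w₀, hw₀, flipFirst σ x₁, ⟨hx', show lam₀ < toFun (flipFirst σ x₁) 0 by
          rw [hx'0]; linarith⟩, rfl⟩
      have hdist : dist (Qlam N lam₀ (flipFirst σ x₁)) (flipFirst σ x₁) < δ := by
        rw [dist_Qlam_self, hx'0]
        rw [abs_of_nonpos (by linarith)]
        linarith
      have habs := hδM w₀ hw₀ _ _ hdist
      have hle := csInf_le (hbdd lam₀) hmem
      have : Vlam N lam₀ w₀ (flipFirst σ x₁) ≤ η := by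
        have := (abs_lt.1 habs).2
        simpa [Vlam] using this.le
      linarith
    linarith [le_of_forall_pos_le_add this]
  -- main ε-δ argument
  rw [Metric.tendsto_nhdsWithin_nhds]
  intro ε hε
  obtain ⟨δ, hδ, hδM⟩ := hMeq (ε / 4) (by positivity)
  refine ⟨δ / 4, by positivity, ?_⟩
  intro lam hlam hdist
  have hlamlt : lam < lam₀ := hlam
  have hgap : lam₀ - lam < δ / 4 := by
    rw [Real.dist_eq] at hdist
    have := (abs_lt.1 hdist).1
    linarith
  -- upper bound: sInf (S lam) ≤ sInf (S lam₀) + ε/4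
  have hub : sInf (S lam) ≤ sInf (S lam₀) + ε / 4 := by
    have key : sInf (S lam) - ε / 4 ≤ sInf (S lam₀) := by
      apply le_csInf (hne lam₀ le_rfl)
      rintro z ⟨w, hw, x, ⟨hxΩ, hxH⟩, rfl⟩
      have hmem : Vlam N lam w x ∈ S lam :=
        ⟨w, hw, x, ⟨hxΩ, show lam < toFun x 0 from hlamlt.trans hxH⟩, rfl⟩
      have hd : dist (Qlam N lam x) (Qlam N lam₀ x) < δ := by
        rw [dist_Qlam_Qlam, abs_of_nonpos (by linarith)]
        linarith
      have habs := abs_lt.1 (hδM w hw _ _ hd)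
      have hle := csInf_le (hbdd lam) hmem
      simp only [Vlam] at hle ⊢
      linarith [habs.1, habs.2]
    linarith
  -- lower bound: sInf (S lam₀) - ε/4 ≤ sInf (S lam)
  have hlb : sInf (S lam₀) - ε / 4 ≤ sInf (S lam) := by
    apply le_csInf (hne lam hlamlt.le)
    rintro z ⟨w, hw, x, ⟨hxΩ, hxH⟩, rfl⟩
    have hxH' : lam < toFun x 0 := hxH
    by_cases hcase : lam₀ < toFun x 0
    · -- x also lies in Ω ∩ H_{lam₀}
      have hmem : Vlam N lam₀ w x ∈ S lam₀ := ⟨w, hw, x, ⟨hxΩ, hcase⟩, rfl⟩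
      have hd : dist (Qlam N lam x) (Qlam N lam₀ x) < δ := by
        rw [dist_Qlam_Qlam, abs_of_nonpos (by linarith)]
        linarith
      have habs := abs_lt.1 (hδM w hw _ _ hd)
      have hge := csInf_le (hbdd lam₀) hmem
      simp only [Vlam] at hge ⊢
      linarith [habs.1, habs.2]
    · -- x is in the thin strip lam < x₀ ≤ lam₀
      push_neg at hcase
      have hd : dist (Qlam N lam x) x < δ := by
        rw [dist_Qlam_self, abs_of_nonpos (by linarith)]
        linarith
      have habs := abs_lt.1 (hδM w hw _ _ hd)
      simp only [Vlam] at habs ⊢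
      linarith [habs.1]
  rw [Real.dist_eq, abs_lt]
  constructor <;> linarith
end
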